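/- Let p, r, m : ℕ, let X be a real matrix with rows indexed by Fin p ⊕ Fin r and columns indexed by Fin m, and let o : Fin p ⊕ Fin r → ℝ. Write X_new, o_new for the restrictions to the Fin p rows and X_rmv, o_rmv for the restrictions to the Fin r rows. Set A = Xᵀ * X and suppose A is invertible and the r × r matrix 1 − X_rmv * A⁻¹ * X_rmvᵀ is invertible. Then X_newᵀ * X_new is invertible, and the vector β_new := (A⁻¹ + A⁻¹ * X_rmvᵀ * (1 − X_rmv * A⁻¹ * X_rmvᵀ)⁻¹ * X_rmv * A⁻¹) *ᵥ (Xᵀ *ᵥ o − X_rmvᵀ *ᵥ o_rmv) satisfies β_new = (X_newᵀ * X_new)⁻¹ *ᵥ (X_newᵀ *ᵥ o_new); in particular β_new solves the normal equations (X_newᵀ * X_new) *ᵥ β_new = X_newᵀ *ᵥ o_new of ordinary least squares on the remaining rows. -/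
import Mathlib


open Matrix

private lemma neg_inv_matrix {r : ℕ} (M : Matrix (Fin r) (Fin r) ℝ) (h : IsUnit M) :
    (-M)⁻¹ = -(M⁻¹) := by
  apply Matrix.inv_eq_right_inv
  rw [Matrix.neg_mul, Matrix.mul_neg, neg_neg,
    Matrix.mul_nonsing_inv _ ((Matrix.isUnit_iff_isUnit_det M).mp h)]

private lemma gram_split {p r m : ℕ} (X : Matrix (Fin p ⊕ Fin r) (Fin m) ℝ) :
    Xᵀ * X = (X.submatrix Sum.inl id)ᵀ * X.submatrix Sum.inl id +
      (X.submatrix Sum.inr id)ᵀ * X.submatrix Sum.inr id := by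
  ext i j
  simp [Matrix.mul_apply, Fintype.sum_sum_type]

private lemma vec_split {p r m : ℕ} (X : Matrix (Fin p ⊕ Fin r) (Fin m) ℝ)
    (o : Fin p ⊕ Fin r → ℝ) :
    Xᵀ *ᵥ o = (X.submatrix Sum.inl id)ᵀ *ᵥ (o ∘ Sum.inl) +
      (X.submatrix Sum.inr id)ᵀ *ᵥ (o ∘ Sum.inr) := by
  ext i
  simp [Matrix.mulVec, dotProduct, Fintype.sum_sum_type]

/-- Correctness of the exact Woodbury-based downdate of the OLS coefficients: with data
rows partitioned into kept rows (`Fin p`, via `Sum.inl`) and removed rows (`Fin r`, via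
`Sum.inr`), if the full Gram matrix `A = Xᵀ * X` is invertible and the `r × r` matrix
`1 - X_rmv * A⁻¹ * X_rmvᵀ` is invertible, then the Gram matrix of the kept rows is
invertible, and the vector
`β_new = (A⁻¹ + A⁻¹ * X_rmvᵀ * (1 - X_rmv * A⁻¹ * X_rmvᵀ)⁻¹ * X_rmv * A⁻¹) *ᵥ
  (Xᵀ *ᵥ o - X_rmvᵀ *ᵥ o_rmv)`
equals the OLS coefficient vector `(X_newᵀ * X_new)⁻¹ *ᵥ (X_newᵀ *ᵥ o_new)` on the kept
rows; in particular it solves the corresponding normal equations. -/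
theorem woodbury_downdate_ols_coefficients (p r m : ℕ)
    (X : Matrix (Fin p ⊕ Fin r) (Fin m) ℝ) (o : Fin p ⊕ Fin r → ℝ)
    (hA : IsUnit (Xᵀ * X))
    (hS : IsUnit ((1 : Matrix (Fin r) (Fin r) ℝ) -
      X.submatrix Sum.inr id * (Xᵀ * X)⁻¹ * (X.submatrix Sum.inr id)ᵀ)) :
    IsUnit ((X.submatrix Sum.inl id)ᵀ * X.submatrix Sum.inl id) ∧
    ((Xᵀ * X)⁻¹ + (Xᵀ * X)⁻¹ * (X.submatrix Sum.inr id)ᵀ *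
        ((1 : Matrix (Fin r) (Fin r) ℝ) -
          X.submatrix Sum.inr id * (Xᵀ * X)⁻¹ * (X.submatrix Sum.inr id)ᵀ)⁻¹ *
        X.submatrix Sum.inr id * (Xᵀ * X)⁻¹) *ᵥ
      (Xᵀ *ᵥ o - (X.submatrix Sum.inr id)ᵀ *ᵥ (o ∘ Sum.inr)) =
      ((X.submatrix Sum.inl id)ᵀ * X.submatrix Sum.inl id)⁻¹ *ᵥ
        ((X.submatrix Sum.inl id)ᵀ *ᵥ (o ∘ Sum.inl)) ∧
    ((X.submatrix Sum.inl id)ᵀ * X.submatrix Sum.inl id) *ᵥ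
      (((Xᵀ * X)⁻¹ + (Xᵀ * X)⁻¹ * (X.submatrix Sum.inr id)ᵀ *
          ((1 : Matrix (Fin r) (Fin r) ℝ) -
            X.submatrix Sum.inr id * (Xᵀ * X)⁻¹ * (X.submatrix Sum.inr id)ᵀ)⁻¹ *
          X.submatrix Sum.inr id * (Xᵀ * X)⁻¹) *ᵥ
        (Xᵀ *ᵥ o - (X.submatrix Sum.inr id)ᵀ *ᵥ (o ∘ Sum.inr))) =
      (X.submatrix Sum.inl id)ᵀ *ᵥ (o ∘ Sum.inl) := by
  set B := X.submatrix Sum.inl id with hB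
  set C := X.submatrix Sum.inr id with hC
  set A := Xᵀ * X with hAdef
  -- the kept Gram matrix as a Woodbury update
  have hsum : A + Cᵀ * (-1 : Matrix (Fin r) (Fin r) ℝ) * C = Bᵀ * B := by
    rw [hAdef, gram_split X]
    simp [← hB, ← hC]
  have hCunit : IsUnit (-1 : Matrix (Fin r) (Fin r) ℝ) := (isUnit_one (M := Matrix (Fin r) (Fin r) ℝ)).neg
  have hneg1 : (-1 : Matrix (Fin r) (Fin r) ℝ)⁻¹ = -1 := by
    rw [neg_inv_matrix _ isUnit_one, inv_one]
  have hACunit : IsUnit ((-1 : Matrix (Fin r) (Fin r) ℝ)⁻¹ + C * A⁻¹ * Cᵀ) := by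
    rw [hneg1]
    have : (-1 : Matrix (Fin r) (Fin r) ℝ) + C * A⁻¹ * Cᵀ = -(1 - C * A⁻¹ * Cᵀ) := by abel
    rw [this]
    exact hS.neg
  -- invertibility of BᵀB
  have hBB : IsUnit (Bᵀ * B) := by
    rw [← hsum]
    obtain ⟨iA⟩ := hA.nonempty_invertible
    obtain ⟨iC⟩ := hCunit.nonempty_invertible
    obtain ⟨iAC⟩ := hACunit.nonempty_invertible
    letI : Invertible A := iA
    letI : Invertible (-1 : Matrix (Fin r) (Fin r) ℝ) := iC
    have hiac : Invertible ((⅟(-1 : Matrix (Fin r) (Fin r) ℝ)) + C * ⅟A * Cᵀ) := by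
      rwa [Matrix.invOf_eq_nonsing_inv, Matrix.invOf_eq_nonsing_inv]
    letI := hiac
    letI := Matrix.invertibleAddMulMul A Cᵀ (-1 : Matrix (Fin r) (Fin r) ℝ) C
    exact isUnit_of_invertible _
  -- the Woodbury matrix equals (BᵀB)⁻¹
  have hW : A⁻¹ + A⁻¹ * Cᵀ * ((1 : Matrix (Fin r) (Fin r) ℝ) - C * A⁻¹ * Cᵀ)⁻¹ * C * A⁻¹ =
      (Bᵀ * B)⁻¹ := by
    rw [← hsum, Matrix.add_mul_mul_inv_eq_sub A Cᵀ (-1) C hA hCunit hACunit]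
    have h1 : ((-1 : Matrix (Fin r) (Fin r) ℝ)⁻¹ + C * A⁻¹ * Cᵀ)
        = -(1 - C * A⁻¹ * Cᵀ) := by rw [hneg1]; abel
    rw [h1, neg_inv_matrix _ hS]
    simp only [Matrix.mul_neg, Matrix.neg_mul, sub_neg_eq_add]
  -- the vector equals Bᵀ o_new
  have hv : Xᵀ *ᵥ o - Cᵀ *ᵥ (o ∘ Sum.inr) = Bᵀ *ᵥ (o ∘ Sum.inl) := by
    rw [vec_split X o]  -- decomposition
    simp [← hB, ← hC]
  refine ⟨hBB, ?_, ?_⟩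
  · rw [hW, hv]
  · rw [hW, hv, Matrix.mulVec_mulVec,
      Matrix.mul_nonsing_inv _ ((Matrix.isUnit_iff_isUnit_det _).mp hBB), Matrix.one_mulVec]
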